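/- Let μ be a locally finite non-negative Borel measure on ℝ^d, x ∈ supp μ, β > 0, and suppose μ(B(x,r)) ≤ r^β for all r ≤ r₀. Suppose moreover that for some ε > 0 there is a sequence r_j → 0 with μ(B(x,r_j)) ≥ r_j^{β+ε}. Define h(t) = -log μ(B(x, e^{-t})) - (β + 2ε) t and let τ be a decrement moment of h⁻ (the running infimum of h). Then for every ρ > 1 and every decrement moment τ with τ ≥ log ρ, one has μ(B(x, ρ e^{-τ})) ≤ ρ^{β+2ε} μ(B(x, e^{-τ})), i.e. T_{x,e^{-τ}}[μ](B(0,ρ)) ≤ ρ^{β+2ε} μ(B(x, e^{-τ})). -/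

import Mathlib

open MeasureTheory Metric Set Filter Topology

/-- The key blow-up estimate (2.13): under the assumptions of Proposition 2.2, with
`h(t) = -log μ(B(x,e^{-t})) - (β+2ε)t` and `h⁻` its running infimum, every decrement
moment `τ` with `τ ≥ log ρ`, `ρ > 1`, satisfies
`μ(B(x, ρ e^{-τ})) ≤ ρ^{β+2ε} μ(B(x, e^{-τ}))`. -/
theorem blowup_estimate_at_decrement_moment
    (d : ℕ) (μ : Measure (EuclideanSpace ℝ (Fin d))) [IsLocallyFiniteMeasure μ]
    (x : EuclideanSpace ℝ (Fin d))
    (hx : ∀ r : ℝ, 0 < r → 0 < μ (closedBall x r))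
    (β : ℝ) (hβ : 0 < β) (ε : ℝ) (hε : 0 < ε) (r₀ : ℝ) (hr₀ : 0 < r₀)
    (hup : ∀ r : ℝ, 0 < r → r ≤ r₀ → μ (closedBall x r) ≤ ENNReal.ofReal (r ^ β))
    (r : ℕ → ℝ) (hrpos : ∀ j, 0 < r j) (hrlim : Tendsto r atTop (𝓝 0))
    (hlow : ∀ j, ENNReal.ofReal (r j ^ (β + ε)) ≤ μ (closedBall x (r j)))
    (h hm : ℝ → ℝ)
    (hh : ∀ t : ℝ, h t =
      - Real.log (μ (closedBall x (Real.exp (-t)))).toReal - (β + 2 * ε) * t)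
    (hhm : ∀ t : ℝ, 0 ≤ t → hm t = sInf (h '' Set.Icc 0 t))
    (τ : ℝ) (hτ : 0 ≤ τ)
    (hdec : ¬ ∃ a b : ℝ, a < τ ∧ τ < b ∧
      ∀ u ∈ Set.Ioo a b ∩ Set.Ici (0:ℝ), hm u = hm τ)
    (ρ : ℝ) (hρ : 1 < ρ) (hρτ : Real.log ρ ≤ τ) :
    μ (closedBall x (ρ * Real.exp (-τ)))
      ≤ ENNReal.ofReal (ρ ^ (β + 2 * ε)) * μ (closedBall x (Real.exp (-τ))) := by
  classical
  set c : ℝ := β + 2 * ε with hc_def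
  have hc : 0 < c := by positivity
  set M : ℝ → ℝ := fun t => (μ (closedBall x (Real.exp (-t)))).toReal with hM_def
  have hfin : ∀ t : ℝ, μ (closedBall x (Real.exp (-t))) ≠ ⊤ := fun t =>
    (isCompact_closedBall x _).measure_lt_top.ne
  have hMpos : ∀ t : ℝ, 0 < M t := fun t =>
    ENNReal.toReal_pos (hx _ (Real.exp_pos _)).ne' (hfin t)
  have hMmono : ∀ ⦃t u : ℝ⦄, t ≤ u → M u ≤ M t := by
    intro t u htu
    exact ENNReal.toReal_mono (hfin t)
      (measure_mono (closedBall_subset_closedBall (Real.exp_le_exp.2 (by linarith))))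
  have hh' : ∀ t : ℝ, h t = - Real.log (M t) - c * t := hh
  -- boundedness below of h on [0,t]
  have hbdd : ∀ t : ℝ, 0 ≤ t → BddBelow (h '' Set.Icc 0 t) := by
    intro t ht
    refine ⟨- Real.log (M 0) - c * t, ?_⟩
    rintro y ⟨v, ⟨hv0, hvt⟩, rfl⟩
    rw [hh' v]
    have h1 : Real.log (M v) ≤ Real.log (M 0) :=
      Real.log_le_log (hMpos v) (hMmono hv0)
    nlinarith [hc.le]
  have hne : ∀ t : ℝ, 0 ≤ t → (h '' Set.Icc 0 t).Nonempty :=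
    fun t ht => ⟨h 0, ⟨0, ⟨le_refl _, ht⟩, rfl⟩⟩
  have hm_le : ∀ t : ℝ, 0 ≤ t → ∀ v ∈ Set.Icc (0:ℝ) t, hm t ≤ h v := by
    intro t ht v hv
    rw [hhm t ht]
    exact csInf_le (hbdd t ht) ⟨v, hv, rfl⟩
  have hτpos : 0 < τ := lt_of_lt_of_le (Real.log_pos hρ) hρτ
  -- Key: at a decrement moment, hm τ = h τ
  have hkey : hm τ = h τ := by
    by_contra hne'
    have hlt : hm τ < h τ := lt_of_le_of_ne (hm_le τ hτ τ ⟨hτ, le_refl τ⟩) hne'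
    set δ : ℝ := h τ - hm τ with hδ_def
    have hδpos : 0 < δ := by simp only [hδ_def]; linarith
    -- left-continuity of h at τ
    have hμt : Tendsto (fun t => μ (closedBall x (Real.exp (-t)))) (𝓝[≤] τ)
        (𝓝 (μ (closedBall x (Real.exp (-τ))))) := by
      have h0 : Tendsto (fun t : ℝ => Real.exp (-t) - Real.exp (-τ)) (𝓝[≤] τ) (𝓝 0) := by
        have h1 : Tendsto (fun t : ℝ => Real.exp (-t)) (𝓝 τ) (𝓝 (Real.exp (-τ))) :=
          (Real.continuous_exp.comp continuous_neg).tendsto τ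
        have h2 := h1.sub (tendsto_const_nhds (x := Real.exp (-τ)))
        rw [sub_self] at h2
        exact h2.mono_left nhdsWithin_le_nhds
      have hthick : Tendsto (fun r : ℝ => μ (cthickening r (closedBall x (Real.exp (-τ)))))
          (𝓝 0) (𝓝 (μ (closedBall x (Real.exp (-τ))))) := by
        refine tendsto_measure_cthickening_of_isClosed ⟨1, one_pos, ?_⟩ Metric.isClosed_closedBall
        rw [cthickening_closedBall one_pos.le (Real.exp_pos _).le]
        exact (isCompact_closedBall x _).measure_lt_top.ne
      have := hthick.comp h0
      refine this.congr' ?_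
      filter_upwards [self_mem_nhdsWithin] with t (ht : t ≤ τ)
      simp only [Function.comp]
      rw [cthickening_closedBall (sub_nonneg.2 (Real.exp_le_exp.2 (neg_le_neg ht)))
        (Real.exp_pos _).le]
      congr 1
      ring
    have hMt : Tendsto M (𝓝[≤] τ) (𝓝 (M τ)) :=
      (ENNReal.tendsto_toReal (hfin τ)).comp hμt
    have hht : Tendsto h (𝓝[≤] τ) (𝓝 (h τ)) := by
      have hlogt : Tendsto (fun t => Real.log (M t)) (𝓝[≤] τ) (𝓝 (Real.log (M τ))) :=
        ((Real.continuousAt_log (hMpos τ).ne').tendsto).comp hMt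
      have hlin : Tendsto (fun t : ℝ => c * t) (𝓝[≤] τ) (𝓝 (c * τ)) :=
        ((continuous_const.mul continuous_id).tendsto τ).mono_left nhdsWithin_le_nhds
      have := hlogt.neg.sub hlin
      refine Tendsto.congr' ?_ (by rw [hh' τ]; exact this)
      filter_upwards with t using (hh' t).symm
    have hev : ∀ᶠ t in 𝓝[≤] τ, hm τ + δ / 2 < h t :=
      hht.eventually (eventually_gt_nhds (by linarith))
    obtain ⟨a, ha, hIoc⟩ := (mem_nhdsLE_iff_exists_Ioc_subset' 
      (show τ - 1 < τ by linarith)).1 hev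
    have haτ : a < τ := ha
    set a' : ℝ := max a 0 with ha'_def
    have ha'τ : a' < τ := max_lt haτ hτpos
    set η : ℝ := δ / (2 * c) with hη_def
    have hηpos : 0 < η := by positivity
    refine hdec ⟨a', τ + η, ha'τ, by linarith, ?_⟩
    rintro u ⟨⟨hu1, hu2⟩, _⟩
    have hu0 : 0 ≤ u := le_trans (le_max_right a 0) hu1.le
    rcases le_or_gt u τ with huτ | huτ
    · -- u ≤ τ
      refine le_antisymm ?_ ?_
      · -- hm u ≤ hm τ
        by_contra hcon
        push_neg at hcon
        set γ : ℝ := hm u - hm τ with hγ_def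
        have hγpos : 0 < γ := by simp only [hγ_def]; linarith
        have : sInf (h '' Set.Icc 0 τ) < hm τ + min γ (δ/2) := by
          rw [← hhm τ hτ]
          have : 0 < min γ (δ/2) := lt_min hγpos (by linarith)
          linarith
        obtain ⟨y, ⟨v, hv, rfl⟩, hy⟩ := exists_lt_of_csInf_lt (hne τ hτ) this
        have hva : v ≤ a := by
          by_contra hva
          push_neg at hva
          have : hm τ + δ / 2 < h v := hIoc ⟨hva, hv.2⟩
          have : h v < hm τ + δ / 2 := lt_of_lt_of_le hy (by
            have := min_le_right γ (δ/2); linarith)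
          linarith
        have hvu : v ∈ Set.Icc (0:ℝ) u :=
          ⟨hv.1, le_trans hva (le_trans (le_max_left a 0) hu1.le)⟩
        have h1 : hm u ≤ h v := hm_le u hu0 v hvu
        have h2 : h v < hm τ + γ := lt_of_lt_of_le hy (by
          have := min_le_left γ (δ/2); linarith)
        simp only [hγ_def] at h2
        linarith
      · -- hm τ ≤ hm u
        rw [hhm u hu0]
        refine le_csInf (hne u hu0) ?_
        rintro y ⟨v, hv, rfl⟩
        exact hm_le τ hτ v ⟨hv.1, le_trans hv.2 huτ⟩
    · -- τ < u
      refine le_antisymm ?_ ?_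
      · rw [hhm τ hτ]
        refine le_csInf (hne τ hτ) ?_
        rintro y ⟨v, hv, rfl⟩
        exact hm_le u hu0 v ⟨hv.1, le_trans hv.2 huτ.le⟩
      · rw [hhm u hu0]
        refine le_csInf (hne u hu0) ?_
        rintro y ⟨v, hv, rfl⟩
        rcases le_or_gt v τ with hvτ | hvτ
        · exact hm_le τ hτ v ⟨hv.1, hvτ⟩
        · -- τ < v ≤ u < τ + η
          have hlog : Real.log (M v) ≤ Real.log (M τ) :=
            Real.log_le_log (hMpos v) (hMmono hvτ.le)
          have hvb : v < τ + η := lt_of_le_of_lt hv.2 hu2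
          have h1 : h τ - c * (v - τ) ≤ h v := by
            rw [hh' v, hh' τ]; nlinarith
          have h2 : c * (v - τ) < δ / 2 := by
            have h3 : v - τ < η := by linarith
            calc c * (v - τ) < c * η := by nlinarith
              _ = δ / 2 := by
                rw [hη_def]; field_simp
          have h4 : δ = h τ - hm τ := hδ_def
          have h5 : 0 < δ := hδpos
          clear_value c δ
          linarith [h1, h2, h4, h5]
  -- now conclude
  have hlogρ : 0 < Real.log ρ := Real.log_pos hρ
  set s : ℝ := τ - Real.log ρ with hs_def
  have hs0 : 0 ≤ s := by simp only [hs_def]; linarith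
  have hsτ : s ≤ τ := by simp only [hs_def]; linarith
  have hhs : h τ ≤ h s := hkey ▸ hm_le τ hτ s ⟨hs0, hsτ⟩
  rw [hh' s, hh' τ] at hhs
  have hlog1 : Real.log (M s) ≤ Real.log (M τ) + c * Real.log ρ := by
    have hcs : c * s = c * τ - c * Real.log ρ := by rw [hs_def]; ring
    linarith [hhs, hcs]
  have hMs : M s ≤ ρ ^ c * M τ := by
    have hrpow : Real.log (ρ ^ c * M τ) = c * Real.log ρ + Real.log (M τ) := by
      rw [Real.log_mul (Real.rpow_pos_of_pos (by linarith) c).ne' (hMpos τ).ne',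
        Real.log_rpow (by linarith)]
    have h5 : Real.log (M s) ≤ Real.log (ρ ^ c * M τ) := by rw [hrpow]; linarith
    exact (Real.log_le_log_iff (hMpos s)
      (mul_pos (Real.rpow_pos_of_pos (by linarith) c) (hMpos τ))).1 h5
  have hexp : Real.exp (-s) = ρ * Real.exp (-τ) := by
    simp only [hs_def]
    rw [neg_sub, Real.exp_sub, Real.exp_log (by linarith : (0:ℝ) < ρ), Real.exp_neg]
    ring
  calc μ (closedBall x (ρ * Real.exp (-τ)))
      = ENNReal.ofReal (M s) := by
        have hfin' : μ (closedBall x (ρ * Real.exp (-τ))) ≠ ⊤ := by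
          rw [← hexp]; exact hfin s
        rw [← ENNReal.ofReal_toReal hfin']
        congr 1
        simp only [hM_def]
        rw [hexp]
    _ ≤ ENNReal.ofReal (ρ ^ c * M τ) := ENNReal.ofReal_le_ofReal hMs
    _ = ENNReal.ofReal (ρ ^ c) * ENNReal.ofReal (M τ) :=
        ENNReal.ofReal_mul (by positivity)
    _ = ENNReal.ofReal (ρ ^ (β + 2 * ε)) * μ (closedBall x (Real.exp (-τ))) := by
        rw [hM_def, ENNReal.ofReal_toReal (hfin τ)]
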